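/- Let p be any prime and let k = m p^b + 1 with m, b ≥ 1 integers and p ∤ m. Then the binomial coefficient C(k, k − p^b) is not divisible by p, and for every integer n with k − p^b < n < k − 1, the binomial coefficient C(k, n) is divisible by p. In other words, k − p^b is the largest number less than k − 1 such that C(k, k − p^b) ≢ 0 (mod p). -/

import Mathlib

private lemma aux_modeq_dvd_iff {p a c : ℕ} (h : a ≡ c [MOD p]) : p ∣ a ↔ p ∣ c := by
  rw [← Nat.modEq_zero_iff_dvd, ← Nat.modEq_zero_iff_dvd]
  exact ⟨h.symm.trans, h.trans⟩

private lemma aux_not_dvd_choose_pow (p m : ℕ) [Fact p.Prime] (hpm : ¬ p ∣ m) :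
    ∀ a : ℕ, ¬ p ∣ Nat.choose (m * p ^ a) (p ^ a) := by
  have hp := (Fact.out : p.Prime)
  have hp0 : 0 < p := hp.pos
  intro a
  induction a with
  | zero => simpa using hpm
  | succ a ih =>
    have h := (Choose.choose_modEq_choose_mod_mul_choose_div_nat
      (p := p) (n := m * p ^ (a + 1)) (k := p ^ (a + 1)))
    have e1 : m * p ^ (a + 1) % p = 0 := by
      rw [pow_succ, ← mul_assoc, Nat.mul_mod_left]
    have e2 : m * p ^ (a + 1) / p = m * p ^ a := by
      rw [pow_succ, ← mul_assoc, Nat.mul_div_cancel _ hp0]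
    have e3 : p ^ (a + 1) % p = 0 := by
      rw [pow_succ, Nat.mul_mod_left]
    have e4 : p ^ (a + 1) / p = p ^ a := by
      rw [pow_succ, Nat.mul_div_cancel _ hp0]
    rw [e1, e2, e3, e4] at h
    simp only [Nat.choose_self, one_mul] at h
    exact fun hd => ih ((aux_modeq_dvd_iff h).mp hd)

private lemma aux_dvd_choose (p : ℕ) [Fact p.Prime] :
    ∀ b m t : ℕ, 0 < t → t < p ^ b → p ∣ Nat.choose (m * p ^ b) t := by
  have hp := (Fact.out : p.Prime)
  have hp0 : 0 < p := hp.pos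
  intro b
  induction b with
  | zero => intro m t ht ht'; simp at ht'; omega
  | succ b ih =>
    intro m t ht ht'
    have h := (Choose.choose_modEq_choose_mod_mul_choose_div_nat
      (p := p) (n := m * p ^ (b + 1)) (k := t))
    have e1 : m * p ^ (b + 1) % p = 0 := by
      rw [pow_succ, ← mul_assoc, Nat.mul_mod_left]
    have e2 : m * p ^ (b + 1) / p = m * p ^ b := by
      rw [pow_succ, ← mul_assoc, Nat.mul_div_cancel _ hp0]
    rw [e1, e2] at h
    rcases Nat.eq_zero_or_pos (t % p) with h0 | h0
    · rcases Nat.eq_zero_or_pos (t / p) with h1 | h1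
      · exfalso
        have ht0 := Nat.mod_add_div t p
        rw [h0, h1, Nat.mul_zero] at ht0
        omega
      · rw [h0, Nat.choose_self, one_mul] at h
        refine (aux_modeq_dvd_iff h).mpr (ih m (t / p) h1 ?_)
        exact (Nat.div_lt_iff_lt_mul hp0).mpr (by rw [← pow_succ]; exact ht')
    · rw [Nat.choose_eq_zero_of_lt h0, zero_mul] at h
      exact (aux_modeq_dvd_iff h).mpr (dvd_zero p)

/-- For a prime `p` and `k = m·p^b + 1` with `m, b ≥ 1` and `p ∤ m`,
the binomial coefficient `C(k, k − p^b)` is not divisible by `p`, while `C(k, n)` is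
divisible by `p` for every `n` with `k − p^b < n < k − 1`; that is, `k − p^b` is the
largest number less than `k − 1` with `C(k, k − p^b) ≢ 0 (mod p)`. -/
theorem choose_k_sub_pb_not_dvd (p m b k : ℕ) (hp : p.Prime) (hm : 1 ≤ m) (hb : 1 ≤ b)
    (hpm : ¬ p ∣ m) (hk : k = m * p ^ b + 1) :
    ¬ p ∣ Nat.choose k (k - p ^ b) ∧
      ∀ n : ℕ, k - p ^ b < n → n < k - 1 → p ∣ Nat.choose k n := by
  haveI : Fact p.Prime := ⟨hp⟩
  have hp0 : 0 < p := hp.pos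
  have hp1 : 1 < p := hp.one_lt
  have hpb : 0 < p ^ b := pow_pos hp0 b
  have hpbk : p ^ b ≤ k := by
    have : p ^ b ≤ m * p ^ b := Nat.le_mul_of_pos_left _ hm
    omega
  constructor
  · rw [Nat.choose_symm hpbk]
    obtain ⟨b', rfl⟩ : ∃ b', b = b' + 1 := ⟨b - 1, by omega⟩
    have hk' : k = p * (m * p ^ b') + 1 := by rw [hk]; ring
    have h := (Choose.choose_modEq_choose_mod_mul_choose_div_nat
      (p := p) (n := k) (k := p ^ (b' + 1)))
    have e1 : k % p = 1 := by
      rw [hk', Nat.mul_add_mod, Nat.mod_eq_of_lt hp1]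
    have e2 : k / p = m * p ^ b' := by
      rw [hk', Nat.mul_add_div hp0, Nat.div_eq_of_lt hp1, add_zero]
    have e3 : p ^ (b' + 1) % p = 0 := by
      rw [pow_succ, Nat.mul_mod_left]
    have e4 : p ^ (b' + 1) / p = p ^ b' := by
      rw [pow_succ, Nat.mul_div_cancel _ hp0]
    rw [e1, e2, e3, e4] at h
    simp only [Nat.choose_zero_right, one_mul] at h
    exact fun hd => aux_not_dvd_choose_pow p m hpm b' ((aux_modeq_dvd_iff h).mp hd)
  · intro n h1 h2
    have hnk : n ≤ k := by omega
    rw [← Nat.choose_symm hnk]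
    obtain ⟨j', hj'⟩ : ∃ j', k - n = j' + 1 := ⟨k - n - 1, by omega⟩
    have hj1 : 1 ≤ j' := by omega
    have hj2 : j' + 1 < p ^ b := by omega
    rw [hj', hk, Nat.choose_succ_succ]
    exact dvd_add (aux_dvd_choose p b m j' (by omega) (by omega))
      (aux_dvd_choose p b m (j' + 1) (by omega) (by omega))
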